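/- Let k be a field of characteristic p > 0, M a finitely generated free abelian group, and σ a convex cone in M ⊗ ℝ containing 0. Then the monoid algebra k[σ ∩ M] is Frobenius split, i.e., the Frobenius endomorphism splits as a map of k[σ ∩ M]-modules. -/

import Mathlib

private def Frob (k : Type*) (_p : ℕ) : Type _ := k

noncomputable instance (k : Type*) (p : ℕ) [Field k] : AddCommGroup (Frob k p) :=
  inferInstanceAs (AddCommGroup k)

noncomputable instance (k : Type*) (p : ℕ) [Field k] : One (Frob k p) :=
  inferInstanceAs (One k)

noncomputable instance (k : Type*) (p : ℕ) [Field k] [Fact p.Prime] [CharP k p] :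
    Module k (Frob k p) :=
  Module.compHom k (frobenius k p)

lemma exists_T (k : Type*) [Field k] (p : ℕ) [Fact p.Prime] [CharP k p] :
    ∃ T : k →+ k, T 1 = 1 ∧ ∀ c x : k, T (c ^ p * x) = c * T x := by
  have h1 : (1 : Frob k p) ≠ 0 := (one_ne_zero : (1:k) ≠ 0)
  have li : LinearIndepOn k id ({1} : Set (Frob k p)) :=
    LinearIndepOn.singleton h1
  let b := Module.Basis.extend li
  have hmem : (1 : Frob k p) ∈ li.extend (Set.subset_univ _) :=
    li.subset_extend _ rfl
  let i : li.extend (Set.subset_univ _) := ⟨1, hmem⟩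
  let T0 : Frob k p →ₗ[k] k := b.coord i
  have hb : b i = 1 := Module.Basis.extend_apply_self li i
  have hsmul : ∀ (c : k) (x : Frob k p), c • x = (show Frob k p from (c ^ p * show k from x)) := by
    intro c x; rfl
  refine ⟨⟨⟨fun x => T0 x, map_zero T0⟩, map_add T0⟩, ?_, ?_⟩
  · show T0 1 = 1
    conv_lhs => rw [← hb]
    simp [T0, Module.Basis.coord_apply, Module.Basis.repr_self]
  · intro c x
    show T0 (show Frob k p from (c ^ p * x)) = c * T0 x
    exact (map_smul T0 c (show Frob k p from x)).trans (smul_eq_mul _ _)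



/-- For a field `k` of characteristic `p > 0` and a convex cone `σ ⊆ ℝ^d` containing `0`,
the monoid algebra `k[σ ∩ ℤ^d]` is Frobenius split: there is an additive map `φ` with
`φ 1 = 1` and `φ (a^p * b) = a * φ b`, i.e. an `R`-linear splitting of Frobenius. -/
theorem monoidAlgebra_frobenius_split {d : ℕ} (k : Type*) [Field k] (p : ℕ)
    [Fact p.Prime] [CharP k p] (σ : Set (Fin d → ℝ))
    (hcone : ∀ x ∈ σ, ∀ t : ℝ, 0 < t → t • x ∈ σ) (hconv : Convex ℝ σ)
    (h0 : (0 : Fin d → ℝ) ∈ σ)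
    (S : AddSubmonoid (Fin d → ℤ))
    (hS : ∀ m : Fin d → ℤ, m ∈ S ↔ (fun i => (m i : ℝ)) ∈ σ) :
    ∃ φ : AddMonoidAlgebra k S →+ AddMonoidAlgebra k S,
      φ 1 = 1 ∧ ∀ a b : AddMonoidAlgebra k S, φ (a ^ p * b) = a * φ b := by
  classical
  obtain ⟨T, hT1, hTp⟩ := exists_T k p
  have hp : p ≠ 0 := (Fact.out : p.Prime).ne_zero
  have coe_nsmul : ∀ (n : ℕ) (m : S), ((n • m : S) : Fin d → ℤ) = n • (m : Fin d → ℤ) :=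
    fun n m => map_nsmul S.subtype n m
  have hmem : ∀ (m : S) (z : Fin d → ℤ), p • z = (m : Fin d → ℤ) → z ∈ S := by
    intro m z hz
    rw [hS]
    have hm : (fun i => ((m : Fin d → ℤ) i : ℝ)) ∈ σ := (hS _).mp m.2
    have hσ := hcone _ hm ((p : ℝ)⁻¹) (by positivity)
    convert hσ using 1
    funext i
    have hmi : ((m : Fin d → ℤ) i : ℝ) = p * z i := by
      rw [← hz]; simp only [Pi.smul_apply, nsmul_eq_mul]; push_cast; ring
    simp only [Pi.smul_apply, smul_eq_mul, hmi]
    field_simp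
  have uniq : ∀ n n' : S, p • n = p • n' → n = n' := by
    intro n n' h
    have h' : p • (n : Fin d → ℤ) = p • (n' : Fin d → ℤ) := by
      rw [← coe_nsmul, ← coe_nsmul, h]
    ext i
    have hi := congrFun h' i
    simp only [Pi.smul_apply, nsmul_eq_mul] at hi
    exact mul_left_cancel₀ (by exact_mod_cast hp) hi
  let P : S → Prop := fun m => ∃ n : S, p • n = m
  let g : S → (k →+ AddMonoidAlgebra k S) := fun m =>
    if h : P m then (AddMonoidAlgebra.singleAddHom h.choose).comp T else 0
  have gpos : ∀ (m : S) (h : P m) (c : k), g m c = AddMonoidAlgebra.single h.choose (T c) := by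
    intro m h c
    simp only [g, dif_pos h]
    rfl
  have gneg : ∀ (m : S) (_h : ¬ P m) (c : k), g m c = 0 := by
    intro m h c; simp only [g, dif_neg h, AddMonoidHom.zero_apply]
  set φ : AddMonoidAlgebra k S →+ AddMonoidAlgebra k S :=
    (Finsupp.liftAddHom g).comp AddMonoidAlgebra.coeffAddEquiv.toAddMonoidHom with hφ
  have φsingle : ∀ (m : S) (c : k), φ (AddMonoidAlgebra.single m c) = g m c := fun m c =>
    Finsupp.liftAddHom_apply_single g m c
  refine ⟨φ, ?_, ?_⟩
  · have h0P : P 0 := ⟨0, smul_zero p⟩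
    have hch : h0P.choose = 0 := uniq _ _ (h0P.choose_spec.trans (smul_zero p).symm)
    show φ (AddMonoidAlgebra.single 0 1) = AddMonoidAlgebra.single 0 1
    rw [φsingle, gpos 0 h0P, hch, hT1]
  · haveI : CharP (AddMonoidAlgebra k S) p :=
      charP_of_injective_ringHom
        (AddMonoidAlgebra.singleZeroRingHom (R := k) (M := S)).injective p
    have key : ∀ (u v : S) (c e : k),
        φ (AddMonoidAlgebra.single u c ^ p * AddMonoidAlgebra.single v e)
          = AddMonoidAlgebra.single u c * φ (AddMonoidAlgebra.single v e) := by
      intro u v c e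
      rw [AddMonoidAlgebra.single_pow, AddMonoidAlgebra.single_mul_single]
      by_cases h : P v
      · have h2 : P (p • u + v) := ⟨u + h.choose, by rw [smul_add, h.choose_spec]⟩
        have hch : h2.choose = u + h.choose :=
          uniq _ _ (h2.choose_spec.trans (by rw [smul_add, h.choose_spec]))
        show φ (AddMonoidAlgebra.single (p • u + v) (c ^ p * e)) = _
        rw [φsingle, φsingle, gpos _ h2, gpos _ h, hch, hTp]
        exact (AddMonoidAlgebra.single_mul_single _ _ _ _).symm
      · have h2 : ¬ P (p • u + v) := by
          rintro ⟨n, hn⟩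
          have hcoe : p • ((n : Fin d → ℤ) - (u : Fin d → ℤ)) = (v : Fin d → ℤ) := by
            have hc := congrArg (fun x : S => (x : Fin d → ℤ)) hn
            simp only [coe_nsmul, AddSubmonoid.coe_add] at hc
            rw [smul_sub, hc]; abel
          exact h ⟨⟨_, hmem v _ hcoe⟩, Subtype.ext (by rw [coe_nsmul]; exact hcoe)⟩
        show φ (AddMonoidAlgebra.single (p • u + v) (c ^ p * e)) = _
        rw [φsingle, φsingle, gneg _ h2, gneg _ h, mul_zero]
    intro a b
    have step1 : ∀ (u : S) (c : k) (b : AddMonoidAlgebra k S),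
        φ (AddMonoidAlgebra.single u c ^ p * b) = AddMonoidAlgebra.single u c * φ b := by
      intro u c b
      induction b using AddMonoidAlgebra.induction with
      | zero => simp
      | single_add v e f _ _ ih =>
        rw [mul_add, map_add, map_add, mul_add, ih]
        congr 1
        exact key u v c e
    induction a using AddMonoidAlgebra.induction with
    | zero => rw [zero_pow hp, zero_mul, map_zero, zero_mul]
    | single_add u c f _ _ ih =>
      rw [add_pow_char, add_mul, map_add, add_mul, ih, step1]
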